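/- Let u : ℝ → ℝ be continuous, let y : ℝ → ℝ be a twice continuously differentiable solution of Hill's equation y'' + u·y = 0, and let φ : ℝ → ℝ be three times continuously differentiable with φ'(x) > 0 for all x. Define z(x) = y(φ(x))·(φ'(x))^{−1/2}. Then z satisfies the transformed Hill equation z''(x) + ũ(x)·z(x) = 0 for all x, where ũ(x) = u(φ(x))·(φ'(x))² + (1/2)·S(φ)(x). (Solutions of Hill's equation transform as densities of degree −1/2 under diffeomorphisms, and the potential transforms by the Virasoro coadjoint action.) -/

import Mathlib

open Real

/-- The Schwarzian derivative `S(φ) = φ'''/φ' − (3/2)·(φ''/φ')²`. -/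
noncomputable def schwarzian (φ : ℝ → ℝ) (x : ℝ) : ℝ :=
  iteratedDeriv 3 φ x / deriv φ x - (3 / 2) * (iteratedDeriv 2 φ x / deriv φ x) ^ 2

/-- Solutions of Hill's equation transform as densities of degree `−1/2` under
diffeomorphisms: if `y'' + u·y = 0` and `z = (y∘φ)·(φ')^{-1/2}`, then
`z'' + ũ·z = 0` with `ũ = (u∘φ)·(φ')² + (1/2)·S(φ)` (the Virasoro coadjoint
action on the potential). -/
theorem hill_density_transform
    (u y φ : ℝ → ℝ) (hu : Continuous u)
    (hy : ContDiff ℝ 2 y)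
    (hye : ∀ x : ℝ, iteratedDeriv 2 y x + u x * y x = 0)
    (hφ : ContDiff ℝ 3 φ) (hφ' : ∀ x : ℝ, 0 < deriv φ x) :
    ∀ x : ℝ, iteratedDeriv 2 (fun s => y (φ s) / Real.sqrt (deriv φ s)) x
        + (u (φ x) * (deriv φ x) ^ 2 + (1 / 2) * schwarzian φ x)
          * (y (φ x) / Real.sqrt (deriv φ x)) = 0 := by
  intro x
  -- regularity facts
  have hy2 : ContDiff ℝ (1 + 1) y := by norm_num; exact hy
  have hyd : Differentiable ℝ y := hy2.differentiable (by norm_num)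
  have hy1 : ContDiff ℝ 1 (deriv y) := (contDiff_succ_iff_deriv.mp hy2).2.2
  have hyd' : Differentiable ℝ (deriv y) := hy1.differentiable one_ne_zero
  have hφ3 : ContDiff ℝ (2 + 1) φ := by norm_num; exact hφ
  have hφd : Differentiable ℝ φ := hφ3.differentiable (by norm_num)
  have hp2 : ContDiff ℝ (1 + 1) (deriv φ) := by
    have := (contDiff_succ_iff_deriv.mp hφ3).2.2; norm_num at this ⊢; exact this
  have hpd : Differentiable ℝ (deriv φ) := hp2.differentiable (by norm_num)
  have hq1 : ContDiff ℝ 1 (deriv (deriv φ)) := (contDiff_succ_iff_deriv.mp hp2).2.2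
  have hqd : Differentiable ℝ (deriv (deriv φ)) := hq1.differentiable one_ne_zero
  -- notation
  set p := deriv φ with hp_def
  set q := deriv (deriv φ) with hq_def
  set r := deriv (deriv (deriv φ)) with hr_def
  have hpne : ∀ s, p s ≠ 0 := fun s => ne_of_gt (hφ' s)
  have hsqpos : ∀ s, 0 < Real.sqrt (p s) := fun s => Real.sqrt_pos.mpr (hφ' s)
  have hsqne : ∀ s, Real.sqrt (p s) ≠ 0 := fun s => ne_of_gt (hsqpos s)
  -- first derivative of z
  have hz1 : ∀ s, HasDerivAt (fun t => y (φ t) / Real.sqrt (p t))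
      ((deriv y (φ s) * p s * Real.sqrt (p s)
        - y (φ s) * (q s / (2 * Real.sqrt (p s)))) / Real.sqrt (p s) ^ 2) s := by
    intro s
    have hyφ : HasDerivAt (fun t => y (φ t)) (deriv y (φ s) * p s) s :=
      (hyd (φ s)).hasDerivAt.comp s (hφd s).hasDerivAt
    have hsq : HasDerivAt (fun t => Real.sqrt (p t)) (q s / (2 * Real.sqrt (p s))) s :=
      ((hpd s).hasDerivAt).sqrt (hpne s)
    exact hyφ.div hsq (hsqne s)
  -- second derivative of z
  have hz2 : HasDerivAt (fun s => (deriv y (φ s) * p s * Real.sqrt (p s)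
        - y (φ s) * (q s / (2 * Real.sqrt (p s)))) / Real.sqrt (p s) ^ 2)
      ((((iteratedDeriv 2 y (φ x) * p x * p x + deriv y (φ x) * q x) * Real.sqrt (p x)
          + deriv y (φ x) * p x * (q x / (2 * Real.sqrt (p x)))
          - (deriv y (φ x) * p x * (q x / (2 * Real.sqrt (p x)))
            + y (φ x) * ((r x * (2 * Real.sqrt (p x))
              - q x * (2 * (q x / (2 * Real.sqrt (p x))))) / (2 * Real.sqrt (p x)) ^ 2)))
          * Real.sqrt (p x) ^ 2
        - (deriv y (φ x) * p x * Real.sqrt (p x)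
            - y (φ x) * (q x / (2 * Real.sqrt (p x))))
          * (2 * Real.sqrt (p x) ^ 1 * (q x / (2 * Real.sqrt (p x)))))
        / (Real.sqrt (p x) ^ 2) ^ 2) x := by
    have hyφ : HasDerivAt (fun t => y (φ t)) (deriv y (φ x) * p x) x :=
      (hyd (φ x)).hasDerivAt.comp x (hφd x).hasDerivAt
    have hy'φ : HasDerivAt (fun t => deriv y (φ t)) (iteratedDeriv 2 y (φ x) * p x) x := by
      have : HasDerivAt (deriv y) (iteratedDeriv 2 y (φ x)) (φ x) := by
        have := (hyd' (φ x)).hasDerivAt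
        rwa [show iteratedDeriv 2 y = deriv (deriv y) by
          simp [iteratedDeriv_succ, iteratedDeriv_zero]]
      exact this.comp x (hφd x).hasDerivAt
    have hpx : HasDerivAt p (q x) x := (hpd x).hasDerivAt
    have hqx : HasDerivAt q (r x) x := (hqd x).hasDerivAt
    have hsq : HasDerivAt (fun t => Real.sqrt (p t)) (q x / (2 * Real.sqrt (p x))) x :=
      hpx.sqrt (hpne x)
    have h2sq : HasDerivAt (fun t => 2 * Real.sqrt (p t)) (2 * (q x / (2 * Real.sqrt (p x)))) x :=
      hsq.const_mul 2
    have hfrac : HasDerivAt (fun t => q t / (2 * Real.sqrt (p t)))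
        ((r x * (2 * Real.sqrt (p x)) - q x * (2 * (q x / (2 * Real.sqrt (p x)))))
          / (2 * Real.sqrt (p x)) ^ 2) x :=
      hqx.div h2sq (mul_ne_zero two_ne_zero (hsqne x))
    have hnum : HasDerivAt (fun t => deriv y (φ t) * p t * Real.sqrt (p t)
        - y (φ t) * (q t / (2 * Real.sqrt (p t))))
        ((iteratedDeriv 2 y (φ x) * p x * p x + deriv y (φ x) * q x) * Real.sqrt (p x)
          + deriv y (φ x) * p x * (q x / (2 * Real.sqrt (p x)))
          - (deriv y (φ x) * p x * (q x / (2 * Real.sqrt (p x)))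
            + y (φ x) * ((r x * (2 * Real.sqrt (p x))
              - q x * (2 * (q x / (2 * Real.sqrt (p x))))) / (2 * Real.sqrt (p x)) ^ 2))) x :=
      (((hy'φ.mul hpx).mul hsq)).sub (hyφ.mul hfrac)
    have hden : HasDerivAt (fun t => Real.sqrt (p t) ^ 2)
        (2 * Real.sqrt (p x) ^ 1 * (q x / (2 * Real.sqrt (p x)))) x := hsq.pow 2
    exact hnum.div hden (pow_ne_zero 2 (hsqne x))
  -- identify the second iterated derivative
  have hderiv1 : deriv (fun s => y (φ s) / Real.sqrt (p s))
      = fun s => (deriv y (φ s) * p s * Real.sqrt (p s)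
        - y (φ s) * (q s / (2 * Real.sqrt (p s)))) / Real.sqrt (p s) ^ 2 :=
    funext fun s => (hz1 s).deriv
  have hit2 : iteratedDeriv 2 (fun s => y (φ s) / Real.sqrt (p s)) x
      = deriv (deriv (fun s => y (φ s) / Real.sqrt (p s))) x := by
    simp [iteratedDeriv_succ, iteratedDeriv_zero]
  rw [hit2, hderiv1, hz2.deriv]
  -- final algebra
  have hsch : schwarzian φ x = r x / p x - (3 / 2) * (q x / p x) ^ 2 := by
    unfold schwarzian
    rw [show iteratedDeriv 3 φ = deriv (deriv (deriv φ)) by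
          simp [iteratedDeriv_succ, iteratedDeriv_zero],
        show iteratedDeriv 2 φ = deriv (deriv φ) by
          simp [iteratedDeriv_succ, iteratedDeriv_zero]]
  have hyeq : iteratedDeriv 2 y (φ x) = -(u (φ x) * y (φ x)) := by
    have := hye (φ x); linarith
  rw [hsch, hyeq]
  have hs2 : Real.sqrt (p x) ^ 2 = p x := Real.sq_sqrt (hφ' x).le
  set s := Real.sqrt (p x) with hs_def
  have hpx : p x = s ^ 2 := hs2.symm
  rw [hpx]
  have hsne : s ≠ 0 := hsqne x
  field_simp
  ring
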